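/- Let G be a graph and let (A, B) be a bipartition of the set of ω-edge blocks of G such that only finitely many pairs (U, W) with U ∈ A and W ∈ B are joined by an edge of G. Then the set of all edges of G with one endpoint in ⋃A and the other endpoint in ⋃B is finite, where ⋃A ⊆ V(G) denotes the union of the blocks in A and ⋃B the union of the blocks in B. -/
import Mathlib


/-- The set of edges of `G` with one endpoint in `A` and the other in `B`. -/
def edgesBetween {V : Type*} (G : SimpleGraph V) (A B : Set V) : Set (Sym2 V) :=
  {e | e ∈ G.edgeSet ∧ ∃ x ∈ A, ∃ y ∈ B, e = s(x, y)}

/-- `x ~ y` iff no finite set of edges of `G` separates `x` from `y`. -/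
def OmegaEquiv {V : Type*} (G : SimpleGraph V) (x y : V) : Prop :=
  ∀ F : Set (Sym2 V), F.Finite → (G.deleteEdges F).Reachable x y

/-- The ω-edge blocks of `G` are the equivalence classes of `OmegaEquiv`. -/
def IsOmegaEdgeBlock {V : Type*} (G : SimpleGraph V) (B : Set V) : Prop :=
  ∃ x, B = {y | OmegaEquiv G x y}

lemma omegaSymm {V : Type*} {G : SimpleGraph V} {x y : V} (h : OmegaEquiv G x y) :
    OmegaEquiv G y x := fun F hF => (h F hF).symm

lemma omegaTrans {V : Type*} {G : SimpleGraph V} {x y z : V} (h : OmegaEquiv G x y)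
    (h' : OmegaEquiv G y z) : OmegaEquiv G x z := fun F hF => (h F hF).trans (h' F hF)

lemma edgesBetween_blocks_finite {V : Type*} (G : SimpleGraph V) {U W : Set V}
    (hU : IsOmegaEdgeBlock G U) (hW : IsOmegaEdgeBlock G W) (hne : U ≠ W) :
    (edgesBetween G U W).Finite := by
  obtain ⟨a, rfl⟩ := hU
  obtain ⟨b, rfl⟩ := hW
  have hab : ¬ OmegaEquiv G a b := by
    intro h
    apply hne
    ext y
    exact ⟨fun hy => omegaTrans (omegaSymm h) hy, fun hy => omegaTrans h hy⟩
  obtain ⟨F, hFfin, hFsep⟩ : ∃ F : Set (Sym2 V), F.Finite ∧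
      ¬ (G.deleteEdges F).Reachable a b := by
    by_contra h
    push_neg at h
    exact hab fun F hF => h F hF
  refine hFfin.subset fun e he => ?_
  obtain ⟨heE, u, hu, w, hw, heq⟩ := he
  by_contra heF
  apply hFsep
  have hadj : (G.deleteEdges F).Adj u w := by
    rw [SimpleGraph.deleteEdges_adj]
    refine ⟨?_, ?_⟩
    · rw [← SimpleGraph.mem_edgeSet, ← heq]; exact heE
    · rw [← heq]; exact heF
  exact ((hu F hFfin).trans hadj.reachable).trans ((hw F hFfin).symm)

/-- If `(A, B)` is a bipartition of the ω-edge blocks of `G` such that only finitely many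
pairs of blocks across the bipartition are joined by an edge, then only finitely many edges
of `G` cross the corresponding vertex bipartition. -/
theorem edges_across_block_bipartition_finite {V : Type*} (G : SimpleGraph V)
    (A B : Set (Set V))
    (hA : ∀ U ∈ A, IsOmegaEdgeBlock G U) (hB : ∀ W ∈ B, IsOmegaEdgeBlock G W)
    (hdisj : Disjoint A B)
    (hcover : ∀ U : Set V, IsOmegaEdgeBlock G U → U ∈ A ∪ B)
    (hpairs : {p : Set V × Set V |
      p.1 ∈ A ∧ p.2 ∈ B ∧ ∃ x ∈ p.1, ∃ y ∈ p.2, G.Adj x y}.Finite) :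
    (edgesBetween G (⋃₀ A) (⋃₀ B)).Finite := by
  have hfin : (⋃ p ∈ {p : Set V × Set V |
      p.1 ∈ A ∧ p.2 ∈ B ∧ ∃ x ∈ p.1, ∃ y ∈ p.2, G.Adj x y},
      edgesBetween G p.1 p.2).Finite := by
    refine hpairs.biUnion fun p hp => ?_
    refine edgesBetween_blocks_finite G (hA p.1 hp.1) (hB p.2 hp.2.1) ?_
    intro h
    exact hdisj.ne_of_mem hp.1 hp.2.1 h
  refine hfin.subset fun e he => ?_
  obtain ⟨heE, x, hx, y, hy, heq⟩ := he
  obtain ⟨U, hUA, hxU⟩ := hx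
  obtain ⟨W, hWB, hyW⟩ := hy
  have hadj : G.Adj x y := by rw [← SimpleGraph.mem_edgeSet, ← heq]; exact heE
  exact Set.mem_biUnion (show (U, W) ∈ _ from ⟨hUA, hWB, x, hxU, y, hyW, hadj⟩)
    ⟨heE, x, hxU, y, hyW, heq⟩
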